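/- Let p ≥ 3 be an odd integer, let f_{p,2}(x,y) = x^p + Σ_{k=1}^{(p−1)/2} c_k x^{p−2k} y^k + y^p with c_k = (p/(p−k))·C(p−k, k), let g₁(x,y) = f_{p,2}(x,y) + x^p·(f_{p,2}(x,y) − 1), and for an integer j with 1 ≤ j ≤ (p−1)/2 define g_{j+1}(x,y) = g₁(x,y) + c_j·x^{p−2j}·y^j·(f_{p,2}(x,y) − 1) ∈ ℝ[x,y]. Then g_{j+1} has non-negative coefficients, g_{j+1}(x,y) = 1 whenever x + y = 1, every pair (a,b) in the support of g_{j+1} satisfies p ∣ a + 2b, and the support of g_{j+1} has exactly p + 2 + j elements. -/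

import Mathlib

open MvPolynomial Finset

/-- exponent vector (a, b) -/
noncomputable def E2 (a b : ℕ) : Fin 2 →₀ ℕ := Finsupp.single 0 a + Finsupp.single 1 b

lemma E2_apply0 (a b : ℕ) : E2 a b 0 = a := by
  simp [E2, Finsupp.single_apply]

lemma E2_apply1 (a b : ℕ) : E2 a b 1 = b := by
  simp [E2, Finsupp.single_apply]

lemma E2_inj {a b a' b' : ℕ} (h : E2 a b = E2 a' b') : a = a' ∧ b = b' := by
  constructor
  · have := DFunLike.congr_fun h 0; rwa [E2_apply0, E2_apply0] at this
  · have := DFunLike.congr_fun h 1; rwa [E2_apply1, E2_apply1] at this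

lemma E2_add (a b a' b' : ℕ) : E2 a b + E2 a' b' = E2 (a+a') (b+b') := by
  simp only [E2, Finsupp.single_add]; abel

lemma monE (r : ℝ) (a b : ℕ) :
    (C r : MvPolynomial (Fin 2) ℝ) * X 0 ^ a * X 1 ^ b = monomial (E2 a b) r := by
  rw [X_pow_eq_monomial, X_pow_eq_monomial, C_mul_monomial, monomial_mul, mul_one, mul_one]
  rfl

lemma monE_mul (a b a' b' : ℕ) (r r' : ℝ) :
    (monomial (E2 a b) r : MvPolynomial (Fin 2) ℝ) * monomial (E2 a' b') r' =
      monomial (E2 (a+a') (b+b')) (r*r') := by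
  rw [monomial_mul, E2_add]

lemma X0_pow (a : ℕ) : (X 0 : MvPolynomial (Fin 2) ℝ) ^ a = monomial (E2 a 0) 1 := by
  rw [X_pow_eq_monomial]; congr 1; simp [E2]

lemma X1_pow (b : ℕ) : (X 1 : MvPolynomial (Fin 2) ℝ) ^ b = monomial (E2 0 b) 1 := by
  rw [X_pow_eq_monomial]; congr 1; simp [E2]


def dd (n k : ℕ) : ℕ := if k = 0 then 1 else (n-k).choose k + (n-1-k).choose (k-1)

lemma dd_zero (n : ℕ) : dd n 0 = 1 := rfl

lemma dd_eq_zero {n k : ℕ} (h2 : 2 ≤ n) (h : n < 2*k) : dd n k = 0 := by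
  have hk : k ≠ 0 := by omega
  rw [dd, if_neg hk, Nat.choose_eq_zero_of_lt (by omega), Nat.choose_eq_zero_of_lt (by omega)]

lemma dd_rec {n k : ℕ} (h3 : 3 ≤ n) (hk1 : 1 ≤ k) (hk2 : 2*k ≤ n) :
    dd n k = dd (n-1) k + dd (n-2) (k-1) := by
  rcases Nat.lt_or_ge k 2 with hk | hk
  · -- k = 1
    have hk' : k = 1 := by omega
    subst hk'
    simp [dd, Nat.choose_one_right]
    omega
  · have hkne : k ≠ 0 := by omega
    have hk1ne : k - 1 ≠ 0 := by omega
    simp only [dd, if_neg hkne, if_neg hk1ne]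
    -- Pascal: (n-k).choose k = (n-1-k).choose (k-1) + (n-1-k).choose k
    have p1 : (n-k).choose k = (n-1-k).choose (k-1) + (n-1-k).choose k := by
      have h : n - k = (n-1-k) + 1 := by omega
      have h2 : k = (k-1) + 1 := by omega
      rw [h, h2, Nat.choose_succ_succ, Nat.succ_sub_one]
    have p2 : (n-1-k).choose (k-1) = (n-2-k).choose (k-2) + (n-2-k).choose (k-1) := by
      have h : n - 1 - k = (n-2-k) + 1 := by omega
      have h2 : k - 1 = (k-2) + 1 := by omega
      rw [h, h2, Nat.choose_succ_succ]
    have e1 : n - 1 - 1 - k = n - 2 - k := by omega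
    have e2 : n - 2 - (k-1) = n - 1 - k := by omega
    have e3 : n - 2 - 1 - (k-1) = n - 2 - k := by omega
    have e4 : k - 1 - 1 = k - 2 := by omega
    rw [e1, e2, e3, e4, p1, p2]
    ring

lemma lucas (n : ℕ) (hn : 1 ≤ n) (x : ℝ) :
    ∑ k ∈ range (n/2 + 1), (dd n k : ℝ) * x^(n - 2*k) * (1-x)^k = 1 + (x-1)^n := by
  -- two-step induction
  suffices h : ∀ t : ℕ,
      (∀ y : ℝ, ∑ k ∈ range ((t+1)/2 + 1), (dd (t+1) k : ℝ) * y^(t+1 - 2*k) * (1-y)^k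
        = 1 + (y-1)^(t+1)) ∧
      (∀ y : ℝ, ∑ k ∈ range ((t+2)/2 + 1), (dd (t+2) k : ℝ) * y^(t+2 - 2*k) * (1-y)^k
        = 1 + (y-1)^(t+2)) by
    obtain ⟨t, rfl⟩ : ∃ t, n = t + 1 := ⟨n - 1, by omega⟩
    exact (h t).1 x
  intro t
  induction t with
  | zero =>
    constructor
    · intro y
      norm_num [Finset.sum_range_one, dd]
    · intro y
      rw [show (2:ℕ)/2 + 1 = 2 by norm_num, Finset.sum_range_succ, Finset.sum_range_one]
      norm_num [dd]
      ring
  | succ t ih =>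
    obtain ⟨ih1, ih2⟩ := ih
    refine ⟨ih2, fun y => ?_⟩
    -- goal about n' = t+3
    have key : ∀ k ∈ range ((t+3)/2 + 1),
        (dd (t+3) k : ℝ) * y^(t+3 - 2*k) * (1-y)^k =
        (dd (t+2) k : ℝ) * y^(t+3 - 2*k) * (1-y)^k +
        (if 1 ≤ k then (dd (t+1) (k-1) : ℝ) else 0) * y^(t+3 - 2*k) * (1-y)^k := by
      intro k hk
      rw [Finset.mem_range] at hk
      rcases Nat.eq_zero_or_pos k with rfl | hkpos
      · simp [dd_zero]
      · rw [if_pos (show 1 ≤ k from hkpos)]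
        have : dd (t+3) k = dd (t+2) k + dd (t+1) (k-1) := by
          have := dd_rec (n := t+3) (k := k) (by omega) hkpos (by omega)
          simpa using this
        rw [this]
        push_cast
        ring
    rw [Finset.sum_congr rfl key, Finset.sum_add_distrib]
    have e2 : ∑ k ∈ range ((t+3)/2 + 1), (dd (t+2) k : ℝ) * y^(t+3 - 2*k) * (1-y)^k
        = y * (1 + (y-1)^(t+2)) := by
      rw [← ih2 y, Finset.mul_sum]
      rw [← Finset.sum_subset (Finset.range_subset_range.mpr (by omega : (t+2)/2 + 1 ≤ (t+3)/2 + 1))]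
      · apply Finset.sum_congr rfl
        intro k hk
        rw [Finset.mem_range] at hk
        have h2k : 2*k ≤ t+2 := by omega
        have : t+3 - 2*k = (t+2 - 2*k) + 1 := by omega
        rw [this, pow_succ]
        ring
      · intro k hk hk2
        rw [Finset.mem_range] at hk
        rw [Finset.mem_range, not_lt] at hk2
        rw [dd_eq_zero (by omega) (by omega)]
        norm_num
    have e3 : ∑ k ∈ range ((t+3)/2 + 1),
        (if 1 ≤ k then (dd (t+1) (k-1) : ℝ) else 0) * y^(t+3 - 2*k) * (1-y)^k
        = (1-y) * (1 + (y-1)^(t+1)) := by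
      rw [← ih1 y, Finset.mul_sum]
      rw [Finset.sum_range_succ']
      have h0 : (if 1 ≤ (0:ℕ) then (dd (t+1) (0-1) : ℝ) else 0) * y^(t+3 - 2*0) * (1-y)^0 = 0 := by
        norm_num
      rw [h0, add_zero]
      have hrange : (t+3)/2 = (t+1)/2 + 1 := by omega
      rw [hrange]
      apply Finset.sum_congr rfl
      intro k hk
      rw [Finset.mem_range] at hk
      have h2k : 2*k ≤ t+1 := by omega
      rw [if_pos (by omega : 1 ≤ k + 1)]
      have e : k + 1 - 1 = k := by omega
      have e' : t + 3 - 2*(k+1) = t + 1 - 2*k := by omega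
      rw [e, e']
      ring
    rw [e2, e3]
    ring



noncomputable def cc (p k : ℕ) : ℝ := (p : ℝ) / ((p : ℝ) - (k : ℝ)) * ((p - k).choose k : ℝ)

lemma cc_zero {p : ℕ} (hp : 0 < p) : cc p 0 = 1 := by
  simp [cc]
  exact_mod_cast hp.ne'

lemma cc_pos {p k : ℕ} (hk : 2*k < p) : 0 < cc p k := by
  have hkp : (k : ℝ) < (p : ℝ) := by exact_mod_cast (by omega : k < p)
  have hp0 : (0:ℝ) < p := by exact_mod_cast (by omega : 0 < p)
  apply mul_pos (div_pos hp0 (by linarith))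
  exact_mod_cast Nat.choose_pos (by omega : k ≤ p - k)

lemma cc_eq_dd {p k : ℕ} (hk1 : 1 ≤ k) (hk2 : 2*k < p) : cc p k = (dd p k : ℝ) := by
  have hkp : k < p := by omega
  have hne : (p : ℝ) - (k : ℝ) ≠ 0 := by
    have : (k:ℝ) < (p:ℝ) := by exact_mod_cast hkp
    linarith
  have hcast : (p : ℝ) - (k : ℝ) = ((p - k : ℕ) : ℝ) := by
    push_cast [Nat.cast_sub hkp.le]
    ring
  rw [cc, dd, if_neg (by omega : k ≠ 0), div_mul_eq_mul_div, div_eq_iff hne, hcast]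
  have hnat : p * (p-k).choose k = ((p-k).choose k + (p-1-k).choose (k-1)) * (p - k) := by
    have h1 : (p-k) * (p-1-k).choose (k-1) = (p-k).choose k * k := by
      have h := Nat.add_one_mul_choose_eq (p-1-k) (k-1)
      have e1 : p-1-k+1 = p - k := by omega
      have e2 : k-1+1 = k := by omega
      simp only [Nat.succ_eq_add_one, e1, e2] at h
      exact h
    have h2 : p - k + k = p := by omega
    calc p * (p-k).choose k = (p-k).choose k * (p - k + k) := by rw [h2]; ring
      _ = (p-k).choose k * (p-k) + (p-k).choose k * k := by ring
      _ = (p-k).choose k * (p-k) + (p-k) * (p-1-k).choose (k-1) := by rw [h1]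
      _ = ((p-k).choose k + (p-1-k).choose (k-1)) * (p - k) := by ring
  exact_mod_cast hnat

lemma key {ι : Type} (s : Finset ι) (e : ι → (Fin 2 →₀ ℕ)) (w : ι → ℝ)
    (hinj : Set.InjOn e s) (hw : ∀ i ∈ s, 0 < w i) :
    (∀ α, 0 ≤ MvPolynomial.coeff α (∑ i ∈ s, monomial (e i) (w i))) ∧
    (∑ i ∈ s, (monomial (e i) (w i) : MvPolynomial (Fin 2) ℝ)).support = s.image e := by
  have hc : ∀ α, MvPolynomial.coeff α (∑ i ∈ s, (monomial (e i) (w i) : MvPolynomial (Fin 2) ℝ)) =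
      ∑ i ∈ s, if e i = α then w i else 0 := by
    intro α
    rw [coeff_sum]
    exact Finset.sum_congr rfl fun i _ => coeff_monomial _ _ _
  refine ⟨fun α => ?_, ?_⟩
  · rw [hc]
    apply Finset.sum_nonneg
    intro i hi
    split
    · exact (hw i hi).le
    · exact le_refl 0
  · ext α
    simp only [MvPolynomial.mem_support_iff, hc, Finset.mem_image]
    constructor
    · intro h
      by_contra hn
      push_neg at hn
      apply h
      apply Finset.sum_eq_zero
      intro i hi
      rw [if_neg (hn i hi)]
    · rintro ⟨i, hi, rfl⟩
      rw [Finset.sum_eq_single_of_mem i hi]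
      · rw [if_pos rfl]
        exact (hw i hi).ne'
      · intro b hb hne
        rw [if_neg]
        exact fun h => hne (hinj hb hi h)


lemma hd1 (m j : ℕ) : Disjoint ((Finset.range (m+j+1)).image fun l => ((0:ℕ), l))
    (((Finset.Icc 1 m).erase j).image fun k => ((1:ℕ), k)) := by
  rw [Finset.disjoint_left]
  rintro ⟨a, b⟩ ha hb
  simp only [Finset.mem_image, Prod.mk.injEq] at ha hb
  obtain ⟨l, -, h0, -⟩ := ha
  obtain ⟨k, -, h1, -⟩ := hb
  omega

lemma hd2 (m j : ℕ) : Disjoint (((Finset.range (m+j+1)).image fun l => ((0:ℕ), l)) ∪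
    (((Finset.Icc 1 m).erase j).image fun k => ((1:ℕ), k)))
    ({(2,0), (2,1), (2,2)} : Finset (ℕ × ℕ)) := by
  rw [Finset.disjoint_left]
  rintro ⟨a, b⟩ ha hb
  simp only [Finset.mem_union, Finset.mem_image, Prod.mk.injEq] at ha
  simp only [Finset.mem_insert, Finset.mem_singleton, Prod.mk.injEq] at hb
  rcases ha with ⟨l, -, h0, -⟩ | ⟨k, -, h1, -⟩ <;> omega

noncomputable def eF (p j : ℕ) (q : ℕ × ℕ) : Fin 2 →₀ ℕ :=
  if q.1 = 0 then E2 (2*p - 2*q.2) q.2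
  else if q.1 = 1 then E2 (p - 2*q.2) q.2
  else if q.2 = 0 then E2 0 p
  else if q.2 = 1 then E2 p p
  else E2 (p - 2*j) (p + j)

noncomputable def wF (p j m : ℕ) (q : ℕ × ℕ) : ℝ :=
  if q.1 = 0 then
    (if q.2 ≤ m then cc p q.2 else 0) + (if j ≤ q.2 then cc p j * cc p (q.2 - j) else 0)
  else if q.1 = 1 then cc p q.2
  else if q.2 = 0 then 1
  else if q.2 = 1 then 1
  else cc p j

def sF (m j : ℕ) : Finset (ℕ × ℕ) :=
  (((Finset.range (m+j+1)).image fun l => ((0:ℕ), l)) ∪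
  (((Finset.Icc 1 m).erase j).image fun k => ((1:ℕ), k))) ∪
  {(2,0), (2,1), (2,2)}

lemma rep (p j m : ℕ) (f : MvPolynomial (Fin 2) ℝ)
    (hf : f = X 0 ^ p + (∑ k ∈ Finset.Icc 1 m, C (cc p k) * X 0 ^ (p - 2*k) * X 1 ^ k) + X 1 ^ p)
    (hm : p = 2*m+1) (hm1 : 1 ≤ m) (hj1 : 1 ≤ j) (hjm : j ≤ m) :
    f + X 0 ^ p * (f - 1) + C (cc p j) * X 0 ^ (p - 2*j) * X 1 ^ j * (f - 1)
      = ∑ i ∈ sF m j, monomial (eF p j i) (wF p j m i) := by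
  have hrange : Finset.range (m+1) = insert 0 (Finset.Icc 1 m) := by
    ext a; simp only [Finset.mem_range, Finset.mem_insert, Finset.mem_Icc]; omega
  have hfm : f = ∑ k ∈ Finset.range (m+1), monomial (E2 (p - 2*k) k) (cc p k)
      + monomial (E2 0 p) 1 := by
    rw [hf, hrange, Finset.sum_insert (by simp)]
    simp only [monE]
    rw [X0_pow p, X1_pow p, Nat.mul_zero, Nat.sub_zero, cc_zero (by omega)]
    try ring
  have hjmem : j ∈ Finset.Icc 1 m := by simp only [Finset.mem_Icc]; omega
  have hsplit : f = monomial (E2 p 0) 1 + monomial (E2 (p-2*j) j) (cc p j)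
      + ((∑ k ∈ (Finset.Icc 1 m).erase j, monomial (E2 (p-2*k) k) (cc p k))
        + monomial (E2 0 p) 1) := by
    have h := Finset.add_sum_erase (Finset.Icc 1 m)
      (fun k => (monomial (E2 (p-2*k) k) (cc p k) : MvPolynomial (Fin 2) ℝ)) hjmem
    rw [hf]
    simp only [monE]
    rw [X0_pow p, X1_pow p, ← h]
    ring
  have hXf : monomial (E2 p 0) (1:ℝ) * f
      = ∑ k ∈ Finset.range (m+1), monomial (E2 (2*p - 2*k) k) (cc p k)
        + monomial (E2 p p) 1 := by
    rw [hfm, mul_add, Finset.mul_sum]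
    congr 1
    · apply Finset.sum_congr rfl
      intro k hk
      rw [Finset.mem_range] at hk
      rw [monE_mul, one_mul, zero_add, show p + (p - 2*k) = 2*p - 2*k from by omega]
    · rw [monE_mul, one_mul, add_zero, zero_add]
  have hMf : monomial (E2 (p-2*j) j) (cc p j) * f
      = ∑ k ∈ Finset.range (m+1), monomial (E2 (2*p - 2*(j+k)) (j+k)) (cc p j * cc p k)
        + monomial (E2 (p-2*j) (p+j)) (cc p j) := by
    rw [hfm, mul_add, Finset.mul_sum]
    congr 1
    · apply Finset.sum_congr rfl
      intro k hk
      rw [Finset.mem_range] at hk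
      rw [monE_mul, show (p-2*j) + (p - 2*k) = 2*p - 2*(j+k) from by omega]
    · rw [monE_mul, mul_one, add_zero, show j + p = p + j from by omega]
  have hmerge : (∑ k ∈ Finset.range (m+1), monomial (E2 (2*p-2*k) k) (cc p k))
      + (∑ k ∈ Finset.range (m+1), monomial (E2 (2*p-2*(j+k)) (j+k)) (cc p j * cc p k))
      = ∑ l ∈ Finset.range (m+j+1), monomial (E2 (2*p-2*l) l)
          ((if l ≤ m then cc p l else 0) + (if j ≤ l then cc p j * cc p (l-j) else 0)) := by
    have hsplit2 : ∑ l ∈ Finset.range (m+j+1), monomial (E2 (2*p-2*l) l)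
          ((if l ≤ m then cc p l else 0) + (if j ≤ l then cc p j * cc p (l-j) else 0))
        = (∑ l ∈ Finset.range (m+j+1), monomial (E2 (2*p-2*l) l) (if l ≤ m then cc p l else 0))
        + (∑ l ∈ Finset.range (m+j+1), monomial (E2 (2*p-2*l) l)
            (if j ≤ l then cc p j * cc p (l-j) else 0)) := by
      rw [← Finset.sum_add_distrib]
      apply Finset.sum_congr rfl
      intro l _
      rw [map_add]
    rw [hsplit2]
    congr 1
    · rw [← Finset.sum_subset (Finset.range_subset_range.mpr (by omega : m+1 ≤ m+j+1))]
      · apply Finset.sum_congr rfl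
        intro k hk
        rw [Finset.mem_range] at hk
        rw [if_pos (by omega : k ≤ m)]
      · intro l _ hl2
        rw [Finset.mem_range, not_lt] at hl2
        rw [if_neg (by omega : ¬ l ≤ m), monomial_zero]
    · rw [← Finset.sum_subset (show Finset.Ico j (j+m+1) ⊆ Finset.range (m+j+1) by
          intro l hl; rw [Finset.mem_Ico] at hl; rw [Finset.mem_range]; omega)]
      · rw [Finset.sum_Ico_eq_sum_range, show j+m+1-j = m+1 from by omega]
        apply Finset.sum_congr rfl
        intro k _
        rw [if_pos (by omega : j ≤ j + k), show j+k-j = k from by omega]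
      · intro l hl hl2
        rw [Finset.mem_range] at hl
        rw [Finset.mem_Ico, not_and_or, not_le, not_lt] at hl2
        rw [if_neg (by omega : ¬ j ≤ l), monomial_zero]
  have hd1 : Disjoint ((Finset.range (m+j+1)).image fun l => ((0:ℕ), l))
      (((Finset.Icc 1 m).erase j).image fun k => ((1:ℕ), k)) := by
    rw [Finset.disjoint_left]
    rintro ⟨a, b⟩ ha hb
    simp only [Finset.mem_image, Prod.mk.injEq] at ha hb
    obtain ⟨l, -, h0, -⟩ := ha
    obtain ⟨k, -, h1, -⟩ := hb
    omega
  have hd2 : Disjoint (((Finset.range (m+j+1)).image fun l => ((0:ℕ), l)) ∪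
      (((Finset.Icc 1 m).erase j).image fun k => ((1:ℕ), k)))
      ({(2,0), (2,1), (2,2)} : Finset (ℕ × ℕ)) := by
    rw [Finset.disjoint_left]
    rintro ⟨a, b⟩ ha hb
    simp only [Finset.mem_union, Finset.mem_image, Prod.mk.injEq] at ha
    simp only [Finset.mem_insert, Finset.mem_singleton, Prod.mk.injEq] at hb
    rcases ha with ⟨l, -, h0, -⟩ | ⟨k, -, h1, -⟩ <;> omega
  have hsum : ∑ i ∈ sF m j, monomial (eF p j i) (wF p j m i)
      = (∑ l ∈ Finset.range (m+j+1), monomial (E2 (2*p-2*l) l)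
          ((if l ≤ m then cc p l else 0) + (if j ≤ l then cc p j * cc p (l-j) else 0)))
      + (∑ k ∈ (Finset.Icc 1 m).erase j, monomial (E2 (p-2*k) k) (cc p k))
      + monomial (E2 0 p) 1 + monomial (E2 p p) 1 + monomial (E2 (p-2*j) (p+j)) (cc p j) := by
    rw [sF, Finset.sum_union hd2, Finset.sum_union hd1]
    rw [Finset.sum_image (by intro x _ y _ h; simpa using h),
        Finset.sum_image (by intro x _ y _ h; simpa using h)]
    rw [show ({(2,0), (2,1), (2,2)} : Finset (ℕ × ℕ))
        = insert (2,0) (insert (2,1) {(2,2)}) from rfl,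
      Finset.sum_insert (by decide), Finset.sum_insert (by decide), Finset.sum_singleton]
    simp only [eF, wF]
    norm_num
    ring
  calc f + X 0 ^ p * (f - 1) + C (cc p j) * X 0 ^ (p - 2*j) * X 1 ^ j * (f - 1)
      = (f - monomial (E2 p 0) 1 - monomial (E2 (p-2*j) j) (cc p j))
        + monomial (E2 p 0) 1 * f + monomial (E2 (p-2*j) j) (cc p j) * f := by
        rw [← X0_pow p, ← monE (cc p j) (p-2*j) j]
        ring
    _ = ∑ i ∈ sF m j, monomial (eF p j i) (wF p j m i) := by
        rw [hXf, hMf, hsum, hsplit]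
        linear_combination hmerge


lemma sf_mem {m j : ℕ} {q : ℕ × ℕ} (hq : q ∈ sF m j) :
    (∃ l, l ≤ m + j ∧ q = (0, l)) ∨ (∃ k, 1 ≤ k ∧ k ≤ m ∧ k ≠ j ∧ q = (1, k)) ∨
    q = (2,0) ∨ q = (2,1) ∨ q = (2,2) := by
  simp only [sF, Finset.mem_union, Finset.mem_image, Finset.mem_range, Finset.mem_erase,
    Finset.mem_Icc, Finset.mem_insert, Finset.mem_singleton] at hq
  rcases hq with (⟨l, hl, rfl⟩ | ⟨k, ⟨hk1, hk2, hk3⟩, rfl⟩) | (h | h | h)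
  · exact Or.inl ⟨l, by omega, rfl⟩
  · exact Or.inr (Or.inl ⟨k, hk2, hk3, hk1, rfl⟩)
  · exact Or.inr (Or.inr (Or.inl h))
  · exact Or.inr (Or.inr (Or.inr (Or.inl h)))
  · exact Or.inr (Or.inr (Or.inr (Or.inr h)))

lemma main (p j : ℕ) (hp : 3 ≤ p) (hodd : Odd p) (hj1 : 1 ≤ j) (hj2 : j ≤ (p-1)/2)
    (f : MvPolynomial (Fin 2) ℝ)
    (hf : f = X 0 ^ p + (∑ k ∈ Finset.Icc 1 ((p-1)/2),
      C (cc p k) * X 0 ^ (p - 2*k) * X 1 ^ k) + X 1 ^ p)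
    (gj : MvPolynomial (Fin 2) ℝ)
    (hgj : gj = f + X 0 ^ p * (f - 1) + C (cc p j) * X 0 ^ (p - 2*j) * X 1 ^ j * (f - 1)) :
    (∀ α, 0 ≤ gj.coeff α) ∧ (∀ x y : ℝ, x + y = 1 → eval ![x,y] gj = 1) ∧
    (∀ α ∈ gj.support, p ∣ α 0 + 2 * α 1) ∧ gj.support.card = p + 2 + j := by
  set m := (p-1)/2 with hmdef
  have hm : p = 2*m+1 := by obtain ⟨t, ht⟩ := hodd; omega
  have hm1 : 1 ≤ m := by omega
  have hjm : j ≤ m := hj2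
  have hrep : gj = ∑ i ∈ sF m j, monomial (eF p j i) (wF p j m i) := by
    rw [hgj]; exact rep p j m f hf hm hm1 hj1 hjm
  have hw : ∀ i ∈ sF m j, 0 < wF p j m i := by
    intro q hq
    rcases sf_mem hq with ⟨l, hl, rfl⟩ | ⟨k, hk1, hk2, hk3, rfl⟩ | rfl | rfl | rfl
    · show 0 < wF p j m (0, l)
      simp only [wF]
      norm_num
      by_cases hlm : l ≤ m
      · rw [if_pos hlm]
        apply add_pos_of_pos_of_nonneg (cc_pos (by omega))
        split
        · exact (mul_pos (cc_pos (by omega)) (cc_pos (by omega))).le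
        · exact le_refl 0
      · rw [if_neg hlm, if_pos (by omega : j ≤ l)]
        apply add_pos_of_nonneg_of_pos (le_refl 0)
        exact mul_pos (cc_pos (by omega)) (cc_pos (by omega))
    · show 0 < wF p j m (1, k)
      simp only [wF]
      norm_num
      exact cc_pos (by omega)
    · show 0 < wF p j m (2, 0)
      simp only [wF]; norm_num
    · show 0 < wF p j m (2, 1)
      simp only [wF]; norm_num
    · show 0 < wF p j m (2, 2)
      simp only [wF]
      norm_num
      exact cc_pos (by omega)
  have hinj : Set.InjOn (eF p j) (sF m j) := by
    intro q hq q' hq' h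
    rcases sf_mem hq with ⟨l, hl, rfl⟩ | ⟨k, hk1, hk2, hk3, rfl⟩ | rfl | rfl | rfl <;>
      rcases sf_mem hq' with ⟨l', hl', rfl⟩ | ⟨k', hk1', hk2', hk3', rfl⟩ | rfl | rfl | rfl <;>
      simp only [eF] at h <;> try norm_num at h
    all_goals try rfl
    all_goals obtain ⟨h1, h2⟩ := E2_inj h
    all_goals first
      | rfl
      | (subst h2; rfl)
      | (exfalso; omega)
  obtain ⟨hc1, hc2⟩ := key (sF m j) (eF p j) (wF p j m) hinj hw
  have hfe : ∀ x y : ℝ, x + y = 1 → eval ![x,y] f = 1 := by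
    intro x y hxy
    have hy : y = 1 - x := by linarith
    subst hy
    rw [hf]
    simp only [map_add, map_sum, map_mul, map_pow, eval_X, eval_C, Matrix.cons_val_zero,
      Matrix.cons_val_one, Matrix.head_cons]
    have hl := lucas p (by omega) x
    have hrange : Finset.range (m+1) = insert 0 (Finset.Icc 1 m) := by
      ext a; simp only [Finset.mem_range, Finset.mem_insert, Finset.mem_Icc]; omega
    rw [show p/2 = m from by omega, hrange, Finset.sum_insert (by simp)] at hl
    have hl2 : x^p + ∑ k ∈ Finset.Icc 1 m, (dd p k : ℝ) * x^(p - 2*k) * (1-x)^k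
        = 1 + (x-1)^p := by
      rw [← hl]
      norm_num [dd_zero]
    have hsum_eq : ∑ k ∈ Finset.Icc 1 m, cc p k * x^(p - 2*k) * (1-x)^k
        = ∑ k ∈ Finset.Icc 1 m, (dd p k : ℝ) * x^(p - 2*k) * (1-x)^k := by
      apply Finset.sum_congr rfl
      intro k hk
      rw [Finset.mem_Icc] at hk
      rw [cc_eq_dd (by omega) (by omega)]
    rw [hsum_eq]
    have hneg : ((1:ℝ)-x)^p = -(x-1)^p := by
      rw [show ((1:ℝ)-x) = -(x-1) from by ring, hodd.neg_pow]
    rw [hneg]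
    linarith [hl2]
  refine ⟨fun α => by rw [hrep]; exact hc1 α, ?_, ?_, ?_⟩
  · intro x y hxy
    rw [hgj]
    simp only [map_add, map_mul, map_sub, map_one, map_pow, eval_X, eval_C]
    rw [hfe x y hxy]
    ring
  · intro α hα
    rw [hrep] at hα
    rw [hc2, Finset.mem_image] at hα
    obtain ⟨i, hi, rfl⟩ := hα
    rcases sf_mem hi with ⟨l, hl, rfl⟩ | ⟨k, hk1, hk2, hk3, rfl⟩ | rfl | rfl | rfl <;>
      simp only [eF] <;> norm_num <;> rw [E2_apply0, E2_apply1]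
    · exact ⟨2, by omega⟩
    · exact ⟨1, by omega⟩
    · exact ⟨2, by omega⟩
    · exact ⟨3, by omega⟩
    · exact ⟨3, by omega⟩
  · rw [hrep, hc2, Finset.card_image_of_injOn hinj]
    have h3 : ({(2,0), (2,1), (2,2)} : Finset (ℕ × ℕ)).card = 3 := by decide
    rw [sF, Finset.card_union_of_disjoint (hd2 m j), Finset.card_union_of_disjoint (hd1 m j),
      Finset.card_image_of_injective _ (fun a b h => by simpa using h),
      Finset.card_image_of_injective _ (fun a b h => by simpa using h),
      Finset.card_range, Finset.card_erase_of_mem (by simp only [Finset.mem_Icc]; omega),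
      Nat.card_Icc, h3]
    omega

theorem stmt_10 (p j : ℕ) (hp : 3 ≤ p) (hodd : Odd p)
    (hj1 : 1 ≤ j) (hj2 : j ≤ (p - 1) / 2) :
    letI c : ℕ → ℝ := fun k => (p : ℝ) / ((p : ℝ) - (k : ℝ)) * ((p - k).choose k : ℝ)
    letI f : MvPolynomial (Fin 2) ℝ :=
      (X 0) ^ p + (∑ k ∈ Finset.Icc 1 ((p - 1) / 2),
        C (c k) * (X 0) ^ (p - 2 * k) * (X 1) ^ k) + (X 1) ^ p
    letI g1 : MvPolynomial (Fin 2) ℝ := f + (X 0) ^ p * (f - 1)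
    letI gj : MvPolynomial (Fin 2) ℝ :=
      g1 + C (c j) * (X 0) ^ (p - 2 * j) * (X 1) ^ j * (f - 1)
    (∀ α, 0 ≤ gj.coeff α) ∧
    (∀ x y : ℝ, x + y = 1 → eval ![x, y] gj = 1) ∧
    (∀ α ∈ gj.support, p ∣ α 0 + 2 * α 1) ∧
    gj.support.card = p + 2 + j := by
  exact main p j hp hodd hj1 hj2 _ rfl _ rfl
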